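/- Let (ℝⁿ, *_G) be a rational stratified Lie group with lattice N and homogeneous quasi-norm ‖·‖, and let 0 ≤ α₁ < α₂ < 1. Then the covering Q^{α₁}(G;N) = {B(δ_{β₁}(k), r‖k‖^{β₁})}_{k∈N∖{0}} is weakly subordinate to Q^{α₂}(G;N), but Q^{α₂}(G;N) is not weakly subordinate to Q^{α₁}(G;N). -/

import Mathlib

open MeasureTheory

/-- The dilations of a stratified Lie group realized on `ℝⁿ` in coordinates adapted to the
stratification: coordinate `j` has degree `v j` and scales as `r ^ v j`. -/
def dil {n : ℕ} (v : Fin n → ℕ) (r : ℝ) (x : Fin n → ℝ) : Fin n → ℝ :=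
  fun j => r ^ v j * x j

/-- A stratified Lie group realized on `ℝⁿ` through the exponential map: a Lie group
structure `*_G` on `ℝⁿ` with identity `0`, together with degrees `deg j ≥ 1` of the
coordinates (adapted to the stratification) such that the associated dilations are group
automorphisms. -/
structure StratifiedGroup (n : ℕ) where
  mul : (Fin n → ℝ) → (Fin n → ℝ) → (Fin n → ℝ)
  inv : (Fin n → ℝ) → (Fin n → ℝ)
  mul_assoc' : ∀ x y z, mul (mul x y) z = mul x (mul y z)
  zero_mul' : ∀ x, mul 0 x = x
  mul_zero' : ∀ x, mul x 0 = x
  inv_mul' : ∀ x, mul (inv x) x = 0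
  continuous_mul' : Continuous fun p : (Fin n → ℝ) × (Fin n → ℝ) => mul p.1 p.2
  continuous_inv' : Continuous inv
  deg : Fin n → ℕ
  deg_pos : ∀ j, 1 ≤ deg j
  dil_mul : ∀ r : ℝ, 0 < r → ∀ x y, dil deg r (mul x y) = mul (dil deg r x) (dil deg r y)

/-- The homogeneous dimension `Q = ∑ j deg j` of a stratified group. -/
def StratifiedGroup.Q {n : ℕ} (S : StratifiedGroup n) : ℕ := ∑ j, S.deg j

/-- A homogeneous quasi-norm on a stratified Lie group: a continuous, nonnegative,
`1`-homogeneous (for the dilations), symmetric function vanishing exactly at the identity. -/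
structure IsQuasiNorm {n : ℕ} (S : StratifiedGroup n) (N : (Fin n → ℝ) → ℝ) : Prop where
  continuous : Continuous N
  nonneg : ∀ x, 0 ≤ N x
  homogeneous : ∀ r : ℝ, 0 < r → ∀ x, N (dil S.deg r x) = r * N x
  symm : ∀ x, N (S.inv x) = N x
  eq_zero_iff : ∀ x, N x = 0 ↔ x = 0

/-- The quasi-ball `B(c, R) = {h : ‖c⁻¹ *_G h‖ < R}`. -/
def qBall {n : ℕ} (S : StratifiedGroup n) (N : (Fin n → ℝ) → ℝ)
    (c : Fin n → ℝ) (R : ℝ) : Set (Fin n → ℝ) :=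
  {h | N (S.mul (S.inv c) h) < R}

/-- The member of the covering `𝓠ʳ_α(G;N)` attached to the lattice point `k`:
the quasi-ball `B(δ_β(k), r‖k‖^β)` with `β = α/(1-α)` and `δ_β(k) = D^G_{‖k‖^β}(k)`. -/
noncomputable def alphaBall {n : ℕ} (S : StratifiedGroup n) (N : (Fin n → ℝ) → ℝ)
    (r α : ℝ) (k : Fin n → ℝ) : Set (Fin n → ℝ) :=
  qBall S N (dil S.deg (N k ^ (α / (1 - α))) k) (r * N k ^ (α / (1 - α)))

set_option linter.unusedSectionVars false

namespace SGaux

variable {n : ℕ} (S : StratifiedGroup n)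

lemma mul_inv (x : Fin n → ℝ) : S.mul x (S.inv x) = 0 := by
  have h1 : S.mul (S.inv (S.inv x)) (S.inv x) = 0 := S.inv_mul' _
  calc S.mul x (S.inv x)
      = S.mul 0 (S.mul x (S.inv x)) := (S.zero_mul' _).symm
    _ = S.mul (S.mul (S.inv (S.inv x)) (S.inv x)) (S.mul x (S.inv x)) := by rw [h1]
    _ = S.mul (S.inv (S.inv x)) (S.mul (S.inv x) (S.mul x (S.inv x))) := S.mul_assoc' _ _ _
    _ = S.mul (S.inv (S.inv x)) (S.mul (S.mul (S.inv x) x) (S.inv x)) := by rw [S.mul_assoc']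
    _ = S.mul (S.inv (S.inv x)) (S.inv x) := by rw [S.inv_mul', S.zero_mul']
    _ = 0 := h1

lemma eq_inv_of_mul_eq_zero {x y : Fin n → ℝ} (h : S.mul x y = 0) : y = S.inv x := by
  calc y = S.mul 0 y := (S.zero_mul' _).symm
    _ = S.mul (S.mul (S.inv x) x) y := by rw [S.inv_mul']
    _ = S.mul (S.inv x) (S.mul x y) := S.mul_assoc' _ _ _
    _ = S.inv x := by rw [h, S.mul_zero']

lemma inv_zero : S.inv 0 = 0 := by
  have := eq_inv_of_mul_eq_zero S (S.zero_mul' 0)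
  exact this.symm

lemma inv_mul_rev (a b : Fin n → ℝ) : S.inv (S.mul a b) = S.mul (S.inv b) (S.inv a) := by
  refine (eq_inv_of_mul_eq_zero S ?_).symm
  calc S.mul (S.mul a b) (S.mul (S.inv b) (S.inv a))
      = S.mul a (S.mul b (S.mul (S.inv b) (S.inv a))) := S.mul_assoc' _ _ _
    _ = S.mul a (S.mul (S.mul b (S.inv b)) (S.inv a)) := by rw [S.mul_assoc']
    _ = 0 := by rw [mul_inv, S.zero_mul', mul_inv]

lemma mul_inv_cancel_left (a b : Fin n → ℝ) : S.mul a (S.mul (S.inv a) b) = b := by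
  rw [← S.mul_assoc', mul_inv, S.zero_mul']

lemma inv_inv (a : Fin n → ℝ) : S.inv (S.inv a) = a := by
  exact (eq_inv_of_mul_eq_zero S (S.inv_mul' a)).symm

lemma dil_dil (v : Fin n → ℕ) (a b : ℝ) (x : Fin n → ℝ) :
    dil v a (dil v b x) = dil v (a * b) x := by
  funext j; simp [dil, mul_pow]; ring

lemma dil_one (v : Fin n → ℕ) (x : Fin n → ℝ) : dil v 1 x = x := by
  funext j; simp [dil]

lemma dil_zero (v : Fin n → ℕ) (s : ℝ) : dil v s 0 = 0 := by
  funext j; simp [dil]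

variable {N : (Fin n → ℝ) → ℝ} (hN : IsQuasiNorm S N)
include hN

lemma N_zero : N 0 = 0 := (hN.eq_zero_iff 0).mpr rfl

lemma N_pos {x : Fin n → ℝ} (hx : x ≠ 0) : 0 < N x :=
  lt_of_le_of_ne (hN.nonneg x) (fun h => hx ((hN.eq_zero_iff x).mp h.symm))

/-- decompose: N a ≤ C-stuff via a = b * (b⁻¹ a)  -/
lemma mul_left_inv_cancel (a b : Fin n → ℝ) : S.mul b (S.mul (S.inv b) a) = a :=
  mul_inv_cancel_left S b a

end SGaux

namespace SGaux
variable {n : ℕ} (S : StratifiedGroup n) {N : (Fin n → ℝ) → ℝ} (hN : IsQuasiNorm S N)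
include hN

lemma continuous_dil_in_r (x : Fin n → ℝ) :
    Continuous fun s : ℝ => dil S.deg s x := by
  exact continuous_pi fun j => (continuous_pow (S.deg j)).mul continuous_const

omit hN in
lemma deg_le_Q (j : Fin n) : S.deg j ≤ S.Q :=
  Finset.single_le_sum (fun i _ => Nat.zero_le _) (Finset.mem_univ j)

lemma norm_le_of_N_le_one (hn : 0 < n) :
    ∃ Rb : ℝ, 0 < Rb ∧ ∀ x, N x ≤ 1 → ‖x‖ ≤ Rb := by
  haveI : Nonempty (Fin n) := ⟨⟨0, hn⟩⟩
  -- minimum of N on the Euclidean unit sphere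
  have hsne : (Metric.sphere (0 : Fin n → ℝ) 1).Nonempty := by
    refine ⟨fun _ => 1, ?_⟩
    rw [mem_sphere_zero_iff_norm, pi_norm_const]; simp
  obtain ⟨z, hz, hzmin⟩ := (isCompact_sphere (0 : Fin n → ℝ) 1).exists_isMinOn hsne
    hN.continuous.continuousOn
  have hzne : z ≠ 0 := by
    intro h
    rw [mem_sphere_zero_iff_norm, h] at hz; simp at hz
  set m := N z with hm
  have hmpos : 0 < m := N_pos S hN hzne
  set c := max 1 m⁻¹ with hc
  have hc1 : 1 ≤ c := le_max_left _ _
  refine ⟨c ^ S.Q, by positivity, fun x hx => ?_⟩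
  rcases eq_or_ne x 0 with rfl | hxne
  · simp; positivity
  · -- find s with ‖dil s x‖ = 1
    obtain ⟨j₀, hj₀⟩ : ∃ j, x j ≠ 0 := by
      by_contra h; push_neg at h; exact hxne (funext h)
    set f : ℝ → ℝ := fun s => ‖dil S.deg s x‖ with hf
    have hfc : Continuous f := (continuous_dil_in_r S hN x).norm
    have hf0 : f 0 = 0 := by
      have : dil S.deg (0:ℝ) x = 0 := by
        funext j
        have : (0:ℝ) ^ S.deg j = 0 := zero_pow (by have := S.deg_pos j; omega)
        simp [dil, this]
      simp [hf, this]
    set s₀ : ℝ := max 1 |x j₀|⁻¹ with hs₀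
    have hs₀1 : 1 ≤ s₀ := le_max_left _ _
    have hfs₀ : 1 ≤ f s₀ := by
      have h1 : |x j₀|⁻¹ ≤ s₀ := le_max_right _ _
      have h2 : s₀ ≤ s₀ ^ S.deg j₀ :=
        le_self_pow₀ hs₀1 (by have := S.deg_pos j₀; omega)
      have h3 : ‖(dil S.deg s₀ x) j₀‖ ≤ f s₀ := norm_le_pi_norm _ j₀
      have h4 : ‖(dil S.deg s₀ x) j₀‖ = s₀ ^ S.deg j₀ * |x j₀| := by
        have hpos : (0:ℝ) < s₀ := by linarith
        simp [dil, Real.norm_eq_abs, abs_mul, abs_pow, abs_of_pos hpos]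
      have h5 : (0:ℝ) < |x j₀| := abs_pos.mpr hj₀
      have : 1 ≤ s₀ * |x j₀| := by
        have h6 := mul_le_mul_of_nonneg_right h1 h5.le
        rwa [inv_mul_cancel₀ h5.ne'] at h6
      calc (1:ℝ) ≤ s₀ * |x j₀| := this
        _ ≤ s₀ ^ S.deg j₀ * |x j₀| := by nlinarith
        _ = ‖(dil S.deg s₀ x) j₀‖ := h4.symm
        _ ≤ f s₀ := h3
    obtain ⟨s, hsmem, hfs⟩ : ∃ s ∈ Set.Icc (0:ℝ) s₀, f s = 1 := by
      have := intermediate_value_Icc (le_trans zero_le_one hs₀1) hfc.continuousOn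
      have h1 : (1:ℝ) ∈ Set.Icc (f 0) (f s₀) := by
        constructor
        · rw [hf0]; exact zero_le_one
        · exact hfs₀
      obtain ⟨s, hs, hfs⟩ := this h1
      exact ⟨s, hs, hfs⟩
    have hspos : 0 < s := by
      rcases lt_or_eq_of_le hsmem.1 with h | h
      · exact h
      · exfalso; rw [← h] at hfs; rw [hf0] at hfs; norm_num at hfs
    -- N x ≥ m / s
    have hsphere : dil S.deg s x ∈ Metric.sphere (0 : Fin n → ℝ) 1 := by
      rw [mem_sphere_zero_iff_norm]; exact hfs
    have hNd : m ≤ N (dil S.deg s x) := hzmin hsphere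
    have hxd : N (dil S.deg s x) = s * N x := hN.homogeneous s hspos x
    have hsm : m ≤ s := by
      have : m ≤ s * N x := by rw [← hxd]; exact hNd
      nlinarith [hN.nonneg x, hx, hspos]
    -- bound coordinates
    have hinv : s⁻¹ ≤ c := by
      calc s⁻¹ ≤ m⁻¹ := by
              apply inv_anti₀ hmpos hsm
        _ ≤ c := le_max_right _ _
    rw [pi_norm_le_iff_of_nonneg (by positivity)]
    intro j
    have hxj : x j = (s⁻¹) ^ S.deg j * (dil S.deg s x) j := by
      simp only [dil, inv_pow]
      rw [← mul_assoc, inv_mul_cancel₀ (pow_ne_zero _ (ne_of_gt hspos)), one_mul]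
    have hdj : ‖(dil S.deg s x) j‖ ≤ 1 := by
      calc ‖(dil S.deg s x) j‖ ≤ ‖dil S.deg s x‖ := norm_le_pi_norm _ j
        _ = 1 := hfs
    have hinvpos : (0:ℝ) ≤ s⁻¹ := by positivity
    calc ‖x j‖ = (s⁻¹) ^ S.deg j * ‖(dil S.deg s x) j‖ := by
          rw [hxj, norm_mul, Real.norm_eq_abs (s⁻¹ ^ S.deg j), abs_pow, abs_of_nonneg hinvpos]
      _ ≤ (s⁻¹) ^ S.deg j * 1 := by
          apply mul_le_mul_of_nonneg_left hdj (by positivity)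
      _ = (s⁻¹) ^ S.deg j := mul_one _
      _ ≤ c ^ S.deg j := pow_le_pow_left₀ hinvpos hinv _
      _ ≤ c ^ S.Q := pow_le_pow_right₀ hc1 (deg_le_Q S j)

lemma isCompact_unitBall (hn : 0 < n) : IsCompact {x : Fin n → ℝ | N x ≤ 1} := by
  obtain ⟨Rb, hRb, h⟩ := norm_le_of_N_le_one S hN hn
  refine (isCompact_closedBall (0 : Fin n → ℝ) Rb).of_isClosed_subset ?_ ?_
  · exact isClosed_le hN.continuous continuous_const
  · intro x hx
    rw [Metric.mem_closedBall, dist_zero_right]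
    exact h x hx

lemma exists_triangle (hn : 0 < n) :
    ∃ C : ℝ, 1 ≤ C ∧ ∀ x y, N (S.mul x y) ≤ C * (N x + N y) := by
  have hK := isCompact_unitBall S hN hn
  have hKK : IsCompact ({x : Fin n → ℝ | N x ≤ 1} ×ˢ {x : Fin n → ℝ | N x ≤ 1}) := hK.prod hK
  have hne : ({x : Fin n → ℝ | N x ≤ 1} ×ˢ {x : Fin n → ℝ | N x ≤ 1}).Nonempty := by
    refine ⟨(0, 0), ?_, ?_⟩ <;> simp [N_zero S hN, zero_le_one]
  have hcontg : Continuous fun p : (Fin n → ℝ) × (Fin n → ℝ) => N (S.mul p.1 p.2) :=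
    hN.continuous.comp S.continuous_mul'
  obtain ⟨p₀, _, hmax⟩ := hKK.exists_isMaxOn hne hcontg.continuousOn
  set C := max 1 (N (S.mul p₀.1 p₀.2)) with hC
  refine ⟨C, le_max_left _ _, fun x y => ?_⟩
  rcases eq_or_lt_of_le (add_nonneg (hN.nonneg x) (hN.nonneg y)) with h | ht
  · have hx0 : N x = 0 := by linarith [hN.nonneg x, hN.nonneg y]
    have hy0 : N y = 0 := by linarith [hN.nonneg x, hN.nonneg y]
    have hx : x = 0 := (hN.eq_zero_iff x).mp hx0
    have hy : y = 0 := (hN.eq_zero_iff y).mp hy0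
    subst hx; subst hy
    rw [S.zero_mul', N_zero S hN]
    have : (1:ℝ) ≤ C := le_max_left _ _
    nlinarith [N_zero S hN]
  · set t := N x + N y with htdef
    have htpos : 0 < t := ht
    have hxm : N (dil S.deg t⁻¹ x) ≤ 1 := by
      rw [hN.homogeneous t⁻¹ (by positivity)]
      rw [inv_mul_le_iff₀ htpos]
      simp [htdef]; linarith [hN.nonneg y]
    have hym : N (dil S.deg t⁻¹ y) ≤ 1 := by
      rw [hN.homogeneous t⁻¹ (by positivity)]
      rw [inv_mul_le_iff₀ htpos]
      simp [htdef]; linarith [hN.nonneg x]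
    have hdec : S.mul x y = dil S.deg t (S.mul (dil S.deg t⁻¹ x) (dil S.deg t⁻¹ y)) := by
      rw [← S.dil_mul t⁻¹ (by positivity) x y, dil_dil, mul_inv_cancel₀ (ne_of_gt htpos), dil_one]
    have hmem : ((dil S.deg t⁻¹ x, dil S.deg t⁻¹ y) : (Fin n → ℝ) × (Fin n → ℝ))
        ∈ {x : Fin n → ℝ | N x ≤ 1} ×ˢ {x : Fin n → ℝ | N x ≤ 1} := ⟨hxm, hym⟩
    have := hmax hmem
    calc N (S.mul x y) = t * N (S.mul (dil S.deg t⁻¹ x) (dil S.deg t⁻¹ y)) := by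
          rw [hdec, hN.homogeneous t htpos]
      _ ≤ t * N (S.mul p₀.1 p₀.2) := by
          apply mul_le_mul_of_nonneg_left this (le_of_lt htpos)
      _ ≤ t * C := by
          apply mul_le_mul_of_nonneg_left (le_max_right _ _) (le_of_lt htpos)
      _ = C * t := mul_comm _ _

end SGaux

namespace SGaux
open MeasureTheory
variable {n : ℕ} (S : StratifiedGroup n) {N : (Fin n → ℝ) → ℝ} (hN : IsQuasiNorm S N)
include hN

lemma isOpen_qBall (c : Fin n → ℝ) (R : ℝ) : IsOpen (qBall S N c R) := by
  have hcont : Continuous fun h => N (S.mul (S.inv c) h) :=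
    hN.continuous.comp (S.continuous_mul'.comp (continuous_const.prodMk continuous_id))
  exact isOpen_lt hcont continuous_const

lemma vol_norm_lt (R : ℝ) (hR : 0 < R) :
    volume {x : Fin n → ℝ | N x < R}
      = ENNReal.ofReal (R ^ S.Q) * volume {x : Fin n → ℝ | N x < 1} := by
  set g : (Fin n → ℝ) →ₗ[ℝ] (Fin n → ℝ) :=
    Matrix.toLin' (Matrix.diagonal fun j => (R⁻¹) ^ S.deg j) with hg
  have hgapp : ∀ x, g x = dil S.deg R⁻¹ x := by
    intro x; funext j
    rw [hg, Matrix.toLin'_apply, Matrix.mulVec_diagonal]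
    rfl
  have hdet : LinearMap.det g = (R⁻¹) ^ S.Q := by
    rw [hg, LinearMap.det_toLin', Matrix.det_diagonal, StratifiedGroup.Q,
      Finset.prod_pow_eq_pow_sum]
  have hdet0 : LinearMap.det g ≠ 0 := by
    rw [hdet]; positivity
  have hset : {x : Fin n → ℝ | N x < R} = g ⁻¹' {x : Fin n → ℝ | N x < 1} := by
    ext x
    simp only [Set.mem_setOf_eq, Set.mem_preimage, hgapp,
      hN.homogeneous R⁻¹ (by positivity) x]
    rw [inv_mul_lt_iff₀ hR, mul_one]
  rw [hset, MeasureTheory.Measure.addHaar_preimage_linearMap volume hdet0, hdet]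
  congr 1
  rw [inv_pow, _root_.inv_inv, abs_pow, abs_of_pos hR]

lemma vol_qBall (c : Fin n → ℝ)
    (hHaar : ∀ (g : Fin n → ℝ) (A : Set (Fin n → ℝ)),
      volume ((fun h => S.mul g h) ⁻¹' A) = volume A)
    (R : ℝ) (hR : 0 < R) :
    volume (qBall S N c R)
      = ENNReal.ofReal (R ^ S.Q) * volume {x : Fin n → ℝ | N x < 1} := by
  have : qBall S N c R = (fun h => S.mul (S.inv c) h) ⁻¹' {x : Fin n → ℝ | N x < R} := rfl
  rw [this, hHaar, vol_norm_lt S hN R hR]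

lemma v_pos : 0 < volume {x : Fin n → ℝ | N x < 1} := by
  have hopen : IsOpen {x : Fin n → ℝ | N x < 1} := isOpen_lt hN.continuous continuous_const
  have hne : {x : Fin n → ℝ | N x < 1}.Nonempty := ⟨0, by simp [N_zero S hN]⟩
  exact hopen.measure_pos volume hne

lemma v_ne_top (hn : 0 < n) : volume {x : Fin n → ℝ | N x < 1} ≠ ⊤ := by
  have hsub : {x : Fin n → ℝ | N x < 1} ⊆ {x : Fin n → ℝ | N x ≤ 1} :=
    fun x hx => le_of_lt (Set.mem_setOf.mp hx)
  exact ne_top_of_le_ne_top (isCompact_unitBall S hN hn).measure_lt_top.ne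
    (measure_mono hsub)

end SGaux

namespace SGaux
open MeasureTheory
variable {n : ℕ} (S : StratifiedGroup n) {N : (Fin n → ℝ) → ℝ} (hN : IsQuasiNorm S N)
include hN

lemma N_inv_mul_comm (a b : Fin n → ℝ) :
    N (S.mul (S.inv a) b) = N (S.mul (S.inv b) a) := by
  have h : S.mul (S.inv b) a = S.inv (S.mul (S.inv a) b) := by
    rw [inv_mul_rev, inv_inv]
  rw [h, hN.symm]

lemma N_chain (u w x : Fin n → ℝ) (C : ℝ)
    (htri : ∀ x y, N (S.mul x y) ≤ C * (N x + N y)) :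
    N (S.mul (S.inv u) w) ≤ C * (N (S.mul (S.inv u) x) + N (S.mul (S.inv x) w)) := by
  have h : S.mul (S.inv u) w = S.mul (S.mul (S.inv u) x) (S.mul (S.inv x) w) := by
    rw [S.mul_assoc', mul_inv_cancel_left]
  rw [h]; exact htri _ _

lemma N_point (u w : Fin n → ℝ) (C : ℝ)
    (htri : ∀ x y, N (S.mul x y) ≤ C * (N x + N y)) :
    N w ≤ C * (N u + N (S.mul (S.inv u) w)) := by
  have h : w = S.mul u (S.mul (S.inv u) w) := (mul_inv_cancel_left S u w).symm
  nth_rewrite 1 [h]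
  exact htri _ _

lemma N_dil_center {k : Fin n → ℝ} (hk : k ≠ 0) (β : ℝ) :
    N (dil S.deg (N k ^ β) k) = N k ^ (1 + β) := by
  have hpos : 0 < N k := N_pos S hN hk
  rw [hN.homogeneous _ (Real.rpow_pos_of_pos hpos β), add_comm,
    Real.rpow_add_one (ne_of_gt hpos)]

set_option maxHeartbeats 1000000 in
/-- The key geometric estimate: if `B(δ_{β'}(l), r‖l‖^{β'})` meets `B(δ_β(k), r‖k‖^β)`
then `‖l‖^{1+β'} ≤ K (1 + ‖k‖^{1+β})` for a constant `K` independent of `k, l`. -/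
lemma meet_bound (C : ℝ) (hC1 : 1 ≤ C) (htri : ∀ x y, N (S.mul x y) ≤ C * (N x + N y))
    (ε : ℝ) (hε : 0 < ε) (r : ℝ) (hr : 0 < r)
    (β β' : ℝ) (hβ : 0 ≤ β) (hβ' : 0 ≤ β')
    {k l : Fin n → ℝ} (hk : k ≠ 0) (hl : l ≠ 0) (hak : ε ≤ N k)
    (hmeet : (qBall S N (dil S.deg (N l ^ β') l) (r * N l ^ β') ∩
              qBall S N (dil S.deg (N k ^ β) k) (r * N k ^ β)).Nonempty) :
    N l ^ (1 + β') ≤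
      (max ((2 * C ^ 2 * r) ^ (1 + β')) (2 * C + 2 * C ^ 2 * r / ε)) * (1 + N k ^ (1 + β)) := by
  obtain ⟨x, hx1, hx2⟩ := hmeet
  set a := N k with ha
  set b := N l with hb
  have hapos : 0 < a := lt_of_lt_of_le hε hak
  have hbpos : 0 < b := N_pos S hN hl
  set A := a ^ (1 + β) with hA
  set B := b ^ (1 + β') with hB
  have hApos : 0 < A := Real.rpow_pos_of_pos hapos _
  have hBpos : 0 < B := Real.rpow_pos_of_pos hbpos _
  set K := max ((2 * C ^ 2 * r) ^ (1 + β')) (2 * C + 2 * C ^ 2 * r / ε) with hK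
  have hCpos : 0 < C := lt_of_lt_of_le one_pos hC1
  have hKpos : 0 < K := by
    have : (0:ℝ) < 2 * C + 2 * C ^ 2 * r / ε := by positivity
    exact lt_max_of_lt_right this
  -- distances
  have hx1' : N (S.mul (S.inv (dil S.deg (b ^ β') l)) x) < r * b ^ β' := hx1
  have hx2' : N (S.mul (S.inv (dil S.deg (a ^ β) k)) x) < r * a ^ β := hx2
  have hD : N (S.mul (S.inv (dil S.deg (a ^ β) k)) (dil S.deg (b ^ β') l))
      ≤ C * (r * a ^ β + r * b ^ β') := by
    have h1 := N_chain S hN (dil S.deg (a ^ β) k) (dil S.deg (b ^ β') l) x C htri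
    have h2 : N (S.mul (S.inv x) (dil S.deg (b ^ β') l))
        = N (S.mul (S.inv (dil S.deg (b ^ β') l)) x) := N_inv_mul_comm S hN _ _
    rw [h2] at h1
    calc N (S.mul (S.inv (dil S.deg (a ^ β) k)) (dil S.deg (b ^ β') l))
        ≤ C * (N (S.mul (S.inv (dil S.deg (a ^ β) k)) x)
            + N (S.mul (S.inv (dil S.deg (b ^ β') l)) x)) := h1
      _ ≤ C * (r * a ^ β + r * b ^ β') := by
          apply mul_le_mul_of_nonneg_left _ (le_of_lt hCpos)
          exact add_le_add (le_of_lt hx2') (le_of_lt hx1')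
  have hBbound : B ≤ C * A + C ^ 2 * r * a ^ β + C ^ 2 * r * b ^ β' := by
    have h1 := N_point S hN (dil S.deg (a ^ β) k) (dil S.deg (b ^ β') l) C htri
    rw [N_dil_center S hN hk β, N_dil_center S hN hl β'] at h1
    nlinarith [hD, hCpos.le]
  have haβ : a ^ β * ε ≤ A := by
    have : a ^ β * a = A := by
      rw [hA, add_comm, Real.rpow_add_one (ne_of_gt hapos)]
    nlinarith [Real.rpow_nonneg hapos.le β]
  have haβ' : a ^ β ≤ A / ε := by
    rw [le_div_iff₀ hε]; exact haβ
  by_cases hcase : B ≤ (2 * C ^ 2 * r) ^ (1 + β')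
  · have h1 : B ≤ K := le_trans hcase (le_max_left _ _)
    have h2 : K ≤ K * (1 + A) := by nlinarith
    linarith
  · push_neg at hcase
    have h2Cr : (0:ℝ) < 2 * C ^ 2 * r := by positivity
    have hbgt : 2 * C ^ 2 * r < b := by
      by_contra hle
      push_neg at hle
      have : B ≤ (2 * C ^ 2 * r) ^ (1 + β') :=
        Real.rpow_le_rpow hbpos.le hle (by linarith)
      linarith
    have habsorb : 2 * (C ^ 2 * r * b ^ β') ≤ B := by
      have hbb : b * b ^ β' = B := by
        rw [hB, Real.rpow_add hbpos, Real.rpow_one]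
      nlinarith [Real.rpow_nonneg hbpos.le β']
    have h3 : C ^ 2 * r * a ^ β ≤ C ^ 2 * r * (A / ε) :=
      mul_le_mul_of_nonneg_left haβ' (by positivity)
    have h4 : C ^ 2 * r * b ^ β' ≤ B / 2 := by linarith
    have hstep : B / 2 ≤ C * A + C ^ 2 * r * (A / ε) := by linarith
    have hd : C ^ 2 * r * (A / ε) = (C ^ 2 * r / ε) * A := by ring
    have hexp : (2 * C + 2 * C ^ 2 * r / ε) * A = 2 * (C * A) + 2 * ((C ^ 2 * r / ε) * A) := by
      ring
    have hfin : B ≤ (2 * C + 2 * C ^ 2 * r / ε) * A := by linarith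
    calc B ≤ (2 * C + 2 * C ^ 2 * r / ε) * A := hfin
      _ ≤ K * A := mul_le_mul_of_nonneg_right (le_max_right _ _) hApos.le
      _ ≤ K * (1 + A) := by nlinarith

end SGaux

namespace SGaux
open MeasureTheory
open scoped ENNReal

/-- Volume-counting: if finitely many measurable sets lie in `Big`, each has volume at least
`low`, and every point lies in at most `M₂` of them, then there are at most
`M₂ * volume Big / low` of them. -/
lemma finset_count {X : Type*} [MeasurableSpace X] (μ : Measure X)
    (F : Finset X) (Ball : X → Set X)
    (hmeas : ∀ l, MeasurableSet (Ball l))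
    (Big : Set X) (hBigMeas : MeasurableSet Big) (hBigsub : ∀ l ∈ F, Ball l ⊆ Big)
    (low : ℝ≥0∞) (hlow : ∀ l ∈ F, low ≤ μ (Ball l)) (M₂ : ℕ)
    (hmult : ∀ x : X, ({l : X | l ∈ F ∧ x ∈ Ball l}).encard ≤ (M₂ : ℕ∞)) :
    (F.card : ℝ≥0∞) * low ≤ (M₂ : ℝ≥0∞) * μ Big := by
  classical
  have step1 : (F.card : ℝ≥0∞) * low ≤ ∑ l ∈ F, μ (Ball l) := by
    have := Finset.card_nsmul_le_sum F (fun l => μ (Ball l)) low hlow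
    simpa [nsmul_eq_mul] using this
  have step2 : ∑ l ∈ F, μ (Ball l)
      = ∫⁻ x, ∑ l ∈ F, (Ball l).indicator (1 : X → ℝ≥0∞) x ∂μ := by
    rw [lintegral_finset_sum _ (fun l _ => (measurable_one.indicator (hmeas l)))]
    refine Finset.sum_congr rfl fun l _ => ?_
    rw [lintegral_indicator (hmeas l)]
    simp
  have step3 : ∀ x, ∑ l ∈ F, (Ball l).indicator (1 : X → ℝ≥0∞) x
      ≤ (M₂ : ℝ≥0∞) * Big.indicator (1 : X → ℝ≥0∞) x := by
    intro x
    by_cases hx : x ∈ Big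
    · rw [Set.indicator_of_mem hx]
      simp only [Pi.one_apply, mul_one]
      have hsum : ∑ l ∈ F, (Ball l).indicator (1 : X → ℝ≥0∞) x
          = ((F.filter fun l => x ∈ Ball l).card : ℝ≥0∞) := by
        rw [Finset.card_filter]
        push_cast
        refine Finset.sum_congr rfl fun l _ => ?_
        by_cases h : x ∈ Ball l <;> simp [Set.indicator_apply, h]
      rw [hsum]
      have hcard : ((F.filter fun l => x ∈ Ball l).card : ℕ∞) ≤ (M₂ : ℕ∞) := by
        have hco : (↑(F.filter fun l => x ∈ Ball l) : Set X)
            = {l : X | l ∈ F ∧ x ∈ Ball l} := by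
          ext l; simp
        calc ((F.filter fun l => x ∈ Ball l).card : ℕ∞)
            = (↑(F.filter fun l => x ∈ Ball l) : Set X).encard := by
              rw [Set.encard_coe_eq_coe_finsetCard]
          _ ≤ (M₂ : ℕ∞) := by rw [hco]; exact hmult x
      have : (F.filter fun l => x ∈ Ball l).card ≤ M₂ := by exact_mod_cast hcard
      exact_mod_cast Nat.cast_le.mpr this
    · have hall : ∀ l ∈ F, (Ball l).indicator (1 : X → ℝ≥0∞) x = 0 := by
        intro l hl
        exact Set.indicator_of_notMem (fun hmem => hx (hBigsub l hl hmem)) _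
      rw [Finset.sum_congr rfl hall, Finset.sum_const, smul_zero]
      exact zero_le
  calc (F.card : ℝ≥0∞) * low ≤ ∑ l ∈ F, μ (Ball l) := step1
    _ = ∫⁻ x, ∑ l ∈ F, (Ball l).indicator (1 : X → ℝ≥0∞) x ∂μ := step2
    _ ≤ ∫⁻ x, (M₂ : ℝ≥0∞) * Big.indicator (1 : X → ℝ≥0∞) x ∂μ :=
        lintegral_mono step3
    _ = (M₂ : ℝ≥0∞) * μ Big := by
        rw [lintegral_const_mul _ (measurable_one.indicator hBigMeas),
          lintegral_indicator hBigMeas]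
        simp

lemma encard_le_of_finset_bound {X : Type*} {G : Set X} (M₀ : ℕ)
    (h : ∀ F : Finset X, (↑F : Set X) ⊆ G → F.card ≤ M₀) : G.encard ≤ (M₀ : ℕ∞) := by
  classical
  by_contra hlt
  push_neg at hlt
  have hle : ((M₀ + 1 : ℕ) : ℕ∞) ≤ G.encard := by
    have := Order.add_one_le_of_lt hlt
    exact_mod_cast this
  obtain ⟨t, htG, htc⟩ := Set.exists_subset_encard_eq hle
  have htfin : t.Finite := Set.finite_of_encard_eq_coe htc
  have hcard : htfin.toFinset.card = M₀ + 1 := by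
    have h2 : ((htfin.toFinset.card : ℕ) : ℕ∞) = ((M₀ + 1 : ℕ) : ℕ∞) := by
      rw [← Set.encard_coe_eq_coe_finsetCard, Set.Finite.coe_toFinset]
      exact htc
    exact_mod_cast h2
  have := h htfin.toFinset (by rw [Set.Finite.coe_toFinset]; exact htG)
  omega

end SGaux

set_option maxHeartbeats 1600000 in
/-- For `0 ≤ α₁ < α₂ < 1`, the covering `𝓠^{α₁}(G;N)` is weakly subordinate
to `𝓠^{α₂}(G;N)`, while `𝓠^{α₂}(G;N)` is not weakly subordinate to `𝓠^{α₁}(G;N)`. -/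
theorem alpha_coverings_weak_subordination {n : ℕ}
    (S : StratifiedGroup n) (N : (Fin n → ℝ) → ℝ) (hN : IsQuasiNorm S N)
    (hHaar : ∀ (g : Fin n → ℝ) (A : Set (Fin n → ℝ)),
      volume ((fun h => S.mul g h) ⁻¹' A) = volume A)
    (L : Set (Fin n → ℝ))
    (hLmul : ∀ a ∈ L, ∀ b ∈ L, S.mul a b ∈ L) (hLinv : ∀ a ∈ L, S.inv a ∈ L)
    (hsep : ∃ ε : ℝ, 0 < ε ∧ ∀ k ∈ L, k ≠ 0 → ε ≤ N k)
    (r : ℝ) (hr : 0 < r)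
    (α₁ α₂ : ℝ) (h₀ : 0 ≤ α₁) (h₁₂ : α₁ < α₂) (h₂ : α₂ < 1)
    (hcov₁ : ⋃ k ∈ L \ {0}, alphaBall S N r α₁ k = Set.univ)
    (hcov₂ : ⋃ k ∈ L \ {0}, alphaBall S N r α₂ k = Set.univ)
    (hadm₁ : ∃ M : ℕ, ∀ k ∈ L \ {0},
      {l ∈ L \ {0} | (alphaBall S N r α₁ k ∩ alphaBall S N r α₁ l).Nonempty}.encard ≤ (M : ℕ∞))
    (hadm₂ : ∃ M : ℕ, ∀ k ∈ L \ {0},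
      {l ∈ L \ {0} | (alphaBall S N r α₂ k ∩ alphaBall S N r α₂ l).Nonempty}.encard ≤ (M : ℕ∞)) :
    (∃ M : ℕ, ∀ k ∈ L \ {0},
      {l ∈ L \ {0} | (alphaBall S N r α₂ l ∩ alphaBall S N r α₁ k).Nonempty}.encard ≤ (M : ℕ∞)) ∧
    ¬ (∃ M : ℕ, ∀ k ∈ L \ {0},
      {l ∈ L \ {0} | (alphaBall S N r α₁ l ∩ alphaBall S N r α₂ k).Nonempty}.encard ≤ (M : ℕ∞)) := by
  classical
  rcases Nat.eq_zero_or_pos n with hn0 | hn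
  · -- degenerate case `n = 0`: the covering hypothesis is contradictory
    exfalso
    subst hn0
    have h0 : (0 : Fin 0 → ℝ) ∈ (Set.univ : Set (Fin 0 → ℝ)) := trivial
    rw [← hcov₁] at h0
    simp only [Set.mem_iUnion] at h0
    obtain ⟨k, hk, _⟩ := h0
    exact hk.2 (by simp only [Set.mem_singleton_iff]; funext j; exact j.elim0)
  obtain ⟨ε, hε, hsepε⟩ := hsep
  obtain ⟨C, hC1, htri⟩ := SGaux.exists_triangle S hN hn
  obtain ⟨M₂, hM₂⟩ := hadm₂
  have hCpos : 0 < C := lt_of_lt_of_le one_pos hC1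
  set β₁ := α₁ / (1 - α₁) with hβ₁def
  clear_value β₁
  set β₂ := α₂ / (1 - α₂) with hβ₂def
  clear_value β₂
  have h1α₁ : 0 < 1 - α₁ := by linarith
  have h1α₂ : 0 < 1 - α₂ := by linarith
  have hβ₁0 : 0 ≤ β₁ := by rw [hβ₁def]; exact div_nonneg h₀ h1α₁.le
  have hβ₂0 : 0 ≤ β₂ := by rw [hβ₂def]; exact div_nonneg (by linarith) h1α₂.le
  have hββ : β₁ < β₂ := by
    rw [hβ₁def, hβ₂def, div_lt_div_iff₀ h1α₁ h1α₂]
    nlinarith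
  have h1β₁ : 0 < 1 + β₁ := by linarith
  have h1β₂ : 0 < 1 + β₂ := by linarith
  set γ₁ := β₁ / (1 + β₁) with hγ₁def
  clear_value γ₁
  set γ₂ := β₂ / (1 + β₂) with hγ₂def
  clear_value γ₂
  have hγ₁0 : 0 ≤ γ₁ := by rw [hγ₁def]; exact div_nonneg hβ₁0 h1β₁.le
  have hγ₂0 : 0 ≤ γ₂ := by rw [hγ₂def]; exact div_nonneg hβ₂0 h1β₂.le
  have hγγ : γ₁ ≤ γ₂ := by
    rw [hγ₁def, hγ₂def, div_le_div_iff₀ h1β₁ h1β₂]; nlinarith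
  set v := volume {x : Fin n → ℝ | N x < 1} with hvdef
  clear_value v
  have hv0 : v ≠ 0 := by rw [hvdef]; exact (SGaux.v_pos S hN).ne'
  have hvtop : v ≠ ⊤ := by rw [hvdef]; exact SGaux.v_ne_top S hN hn
  have hQ1 : 1 ≤ S.Q := le_trans (S.deg_pos ⟨0, hn⟩) (SGaux.deg_le_Q S ⟨0, hn⟩)
  have hLprop : ∀ k ∈ L \ ({0} : Set (Fin n → ℝ)), k ≠ 0 ∧ ε ≤ N k ∧ 0 < N k := by
    intro k hk
    have hk0 : k ≠ 0 := fun h => hk.2 (by simp [h])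
    exact ⟨hk0, hsepε k hk.1 hk0, SGaux.N_pos S hN hk0⟩
  have hB1 : ∀ k, alphaBall S N r α₁ k
      = qBall S N (dil S.deg (N k ^ β₁) k) (r * N k ^ β₁) := by
    intro k; rw [hβ₁def]; rfl
  have hB2 : ∀ k, alphaBall S N r α₂ k
      = qBall S N (dil S.deg (N k ^ β₂) k) (r * N k ^ β₂) := by
    intro k; rw [hβ₂def]; rfl
  have hvol : ∀ (β : ℝ) (k : Fin n → ℝ), k ≠ 0 →
      volume (qBall S N (dil S.deg (N k ^ β) k) (r * N k ^ β))
        = ENNReal.ofReal ((r * N k ^ β) ^ S.Q) * v := by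
    intro β k hk
    rw [hvdef]
    exact SGaux.vol_qBall S hN _ hHaar _
      (mul_pos hr (Real.rpow_pos_of_pos (SGaux.N_pos S hN hk) β))
  have hcollapse : ∀ b β : ℝ, 0 < b → 0 < 1 + β → (b ^ (1 + β)) ^ (β / (1 + β)) = b ^ β := by
    intro b β hb h1β
    rw [← Real.rpow_mul hb.le]
    congr 1
    field_simp
  -- pointwise multiplicity of the `α₂` covering
  have hmult : ∀ x : Fin n → ℝ,
      {l | l ∈ L \ ({0} : Set (Fin n → ℝ)) ∧ x ∈ alphaBall S N r α₂ l}.encard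
        ≤ (M₂ : ℕ∞) := by
    intro x
    by_cases hex : ∃ l₀, l₀ ∈ L \ ({0} : Set (Fin n → ℝ)) ∧ x ∈ alphaBall S N r α₂ l₀
    · obtain ⟨l₀, hl₀, hxl₀⟩ := hex
      refine le_trans (Set.encard_mono ?_) (hM₂ l₀ hl₀)
      rintro l ⟨hlmem, hxl⟩
      exact ⟨hlmem, ⟨x, hxl₀, hxl⟩⟩
    · push_neg at hex
      have : {l | l ∈ L \ ({0} : Set (Fin n → ℝ)) ∧ x ∈ alphaBall S N r α₂ l} = ∅ := by
        ext l; simp only [Set.mem_setOf_eq, Set.mem_empty_iff_false, iff_false, not_and]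
        exact hex l
      rw [this, Set.encard_empty]
      exact zero_le
  constructor
  · -- PART 1 : weak subordination
    set K := max ((2 * C ^ 2 * r) ^ (1 + β₂)) (2 * C + 2 * C ^ 2 * r / ε) with hKdef
    clear_value K
    set K' := max ((2 * C ^ 2 * r) ^ (1 + β₁)) (2 * C + 2 * C ^ 2 * r / ε) with hK'def
    clear_value K'
    have haux1 : (1 : ℝ) ≤ 2 * C + 2 * C ^ 2 * r / ε := by
      have : (0:ℝ) ≤ 2 * C ^ 2 * r / ε := by positivity
      linarith
    have hK1 : 1 ≤ K := by rw [hKdef]; exact le_trans haux1 (le_max_right _ _)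
    have hK'1 : 1 ≤ K' := by rw [hK'def]; exact le_trans haux1 (le_max_right _ _)
    have hKpos : 0 < K := lt_of_lt_of_le one_pos hK1
    have hK'pos : 0 < K' := lt_of_lt_of_le one_pos hK'1
    set c₀ := min (1 / (3 * K')) (ε ^ (1 + β₂) / (3 * K')) with hc₀def
    clear_value c₀
    have hc₀pos : 0 < c₀ := by
      rw [hc₀def]
      exact lt_min (by positivity) (div_pos (Real.rpow_pos_of_pos hε _) (by positivity))
    set Λ := (K / c₀) ^ γ₂ with hΛdef
    clear_value Λ
    have hΛpos : 0 < Λ := by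
      rw [hΛdef]; exact Real.rpow_pos_of_pos (div_pos hKpos hc₀pos) _
    set cγ := c₀ ^ γ₂ with hcγdef
    clear_value cγ
    have hcγpos : 0 < cγ := by rw [hcγdef]; exact Real.rpow_pos_of_pos hc₀pos _
    set lam := C * (C * r / cγ + C * r * Λ + r * Λ) + 1 with hlamdef
    clear_value lam
    have hlam0 : (0:ℝ) ≤ C * (C * r / cγ + C * r * Λ + r * Λ) := by
      have h1 : (0:ℝ) ≤ C * r / cγ := div_nonneg (mul_nonneg hCpos.le hr.le) hcγpos.le
      have h2 : (0:ℝ) ≤ C * r * Λ := mul_nonneg (mul_nonneg hCpos.le hr.le) hΛpos.le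
      have h3 : (0:ℝ) ≤ r * Λ := mul_nonneg hr.le hΛpos.le
      exact mul_nonneg hCpos.le (by linarith)
    have hlam1 : 1 ≤ lam := by rw [hlamdef]; linarith
    have hlampos : 0 < lam := lt_of_lt_of_le one_pos hlam1
    refine ⟨⌈(M₂ : ℝ) * lam ^ S.Q / r ^ S.Q⌉₊, fun k hk => ?_⟩
    obtain ⟨hk0, hkε, hkpos⟩ := hLprop k hk
    set a := N k with hadef
    clear_value a
    set A := a ^ (1 + β₁) with hAdef
    clear_value A
    have hApos : 0 < A := by rw [hAdef]; exact Real.rpow_pos_of_pos hkpos _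
    set W := 1 + A with hWdef
    clear_value W
    have hW1 : 1 ≤ W := by rw [hWdef]; linarith
    have hWpos : 0 < W := by linarith
    set s := (c₀ * W) ^ γ₂ with hsdef
    clear_value s
    have hspos : 0 < s := by
      rw [hsdef]; exact Real.rpow_pos_of_pos (mul_pos hc₀pos hWpos) _
    apply SGaux.encard_le_of_finset_bound
    intro F hF
    -- the per-element geometric facts
    have hper : ∀ l ∈ F,
        alphaBall S N r α₂ l ⊆ qBall S N (dil S.deg (N k ^ β₁) k) (lam * s) ∧
        ENNReal.ofReal ((r * s) ^ S.Q) * v ≤ volume (alphaBall S N r α₂ l) := by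
      intro l hlF
      obtain ⟨hlmem, hmeet⟩ := hF hlF
      obtain ⟨hl0, hlε, hlpos⟩ := hLprop l hlmem
      set b := N l with hbdef
      clear_value b
      set B := b ^ (1 + β₂) with hBdef
      clear_value B
      have hBpos : 0 < B := by rw [hBdef]; exact Real.rpow_pos_of_pos hlpos _
      rw [hB1, hB2, ← hbdef, ← hadef] at hmeet
      -- upper bound : B ≤ K * W
      have hup : B ≤ K * W := by
        rw [hBdef, hbdef, hKdef, hWdef, hAdef, hadef]
        rw [hbdef, hadef] at hmeet
        exact SGaux.meet_bound S hN C hC1 htri ε hε r hr β₁ β₂ hβ₁0 hβ₂0 hk0 hl0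
          (hadef ▸ hkε) hmeet
      -- lower bound : c₀ * W ≤ B
      have hrev : A ≤ K' * (1 + B) := by
        rw [hAdef, hadef, hK'def, hBdef, hbdef]
        have hmeet' : (qBall S N (dil S.deg (N k ^ β₁) k) (r * N k ^ β₁) ∩
            qBall S N (dil S.deg (N l ^ β₂) l) (r * N l ^ β₂)).Nonempty := by
          rw [hbdef, hadef] at hmeet
          obtain ⟨x, hx1, hx2⟩ := hmeet
          exact ⟨x, hx2, hx1⟩
        exact SGaux.meet_bound S hN C hC1 htri ε hε r hr β₂ β₁ hβ₂0 hβ₁0 hl0 hk0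
          (hbdef ▸ hlε) hmeet'
      have hεB : ε ^ (1 + β₂) ≤ B := by
        rw [hBdef]
        exact Real.rpow_le_rpow hε.le hlε (by linarith)
      have hlow : c₀ * W ≤ B := by
        rcases le_or_gt (3 * K') W with hcase | hcase
        · have e1 : c₀ ≤ 1 / (3 * K') := by rw [hc₀def]; exact min_le_left _ _
          have p1 : W ≤ 3 * (K' * B) := by linarith [hrev, hK'1, hcase, hWpos]
          have p2 : c₀ * W ≤ (1 / (3 * K')) * W :=
            mul_le_mul_of_nonneg_right e1 hWpos.le
          have p3 : (1 / (3 * K')) * W ≤ B := by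
            rw [div_mul_eq_mul_div, one_mul, div_le_iff₀ (by positivity)]
            linarith [p1]
          exact le_trans p2 p3
        · have e4 : c₀ ≤ ε ^ (1 + β₂) / (3 * K') := by rw [hc₀def]; exact min_le_right _ _
          have p2 : c₀ * W ≤ c₀ * (3 * K') :=
            mul_le_mul_of_nonneg_left hcase.le hc₀pos.le
          have p3 : c₀ * (3 * K') ≤ ε ^ (1 + β₂) := by
            rw [← le_div_iff₀ (by positivity)]
            exact e4
          exact le_trans p2 (le_trans p3 hεB)
      -- size comparisons
      have hbβ₂ : b ^ β₂ = B ^ γ₂ := by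
        rw [hBdef, hγ₂def, hcollapse b β₂ hlpos h1β₂]
      have hsle : s ≤ b ^ β₂ := by
        rw [hbβ₂, hsdef]
        exact Real.rpow_le_rpow (mul_pos hc₀pos hWpos).le hlow hγ₂0
      have hble : b ^ β₂ ≤ Λ * s := by
        rw [hbβ₂, hΛdef, hsdef,
          ← Real.mul_rpow (div_pos hKpos hc₀pos).le (mul_pos hc₀pos hWpos).le]
        have hKW : K / c₀ * (c₀ * W) = K * W := by
          field_simp [hc₀pos.ne']
        rw [hKW]
        exact Real.rpow_le_rpow hBpos.le hup hγ₂0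
      have haβ₁ : a ^ β₁ ≤ s / cγ := by
        have e1 : a ^ β₁ = A ^ γ₁ := by
          rw [hAdef, hγ₁def, hcollapse a β₁ hkpos h1β₁]
        have e2 : A ^ γ₁ ≤ W ^ γ₁ :=
          Real.rpow_le_rpow hApos.le (by rw [hWdef]; linarith) hγ₁0
        have e3 : W ^ γ₁ ≤ W ^ γ₂ := Real.rpow_le_rpow_of_exponent_le hW1 hγγ
        have e4 : W ^ γ₂ = s / cγ := by
          rw [hsdef, hcγdef, Real.mul_rpow hc₀pos.le hWpos.le]
          exact (mul_div_cancel_left₀ _ (ne_of_gt (Real.rpow_pos_of_pos hc₀pos γ₂))).symm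
        rw [e1, ← e4]
        linarith
      -- the center of B₂(l) is close to δ_{β₁}(k)
      rw [hbdef, hadef] at hmeet
      obtain ⟨x, hx1, hx2⟩ := hmeet
      have hD : N (S.mul (S.inv (dil S.deg (N k ^ β₁) k)) (dil S.deg (N l ^ β₂) l))
          ≤ C * (r * N k ^ β₁ + r * N l ^ β₂) := by
        have h1 := SGaux.N_chain S hN (dil S.deg (N k ^ β₁) k) (dil S.deg (N l ^ β₂) l) x C htri
        have h2 : N (S.mul (S.inv x) (dil S.deg (N l ^ β₂) l))
            = N (S.mul (S.inv (dil S.deg (N l ^ β₂) l)) x) := SGaux.N_inv_mul_comm S hN _ _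
        rw [h2] at h1
        have hx1' : N (S.mul (S.inv (dil S.deg (N l ^ β₂) l)) x) < r * N l ^ β₂ := hx1
        have hx2' : N (S.mul (S.inv (dil S.deg (N k ^ β₁) k)) x) < r * N k ^ β₁ := hx2
        calc N (S.mul (S.inv (dil S.deg (N k ^ β₁) k)) (dil S.deg (N l ^ β₂) l))
            ≤ C * (N (S.mul (S.inv (dil S.deg (N k ^ β₁) k)) x)
                + N (S.mul (S.inv (dil S.deg (N l ^ β₂) l)) x)) := h1
          _ ≤ C * (r * N k ^ β₁ + r * N l ^ β₂) :=
              mul_le_mul_of_nonneg_left (add_le_add hx2'.le hx1'.le) hCpos.le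
      constructor
      · -- containment in the big ball
        rw [hB2]
        intro y hy
        have hy' : N (S.mul (S.inv (dil S.deg (N l ^ β₂) l)) y) < r * N l ^ β₂ := hy
        have hchain := SGaux.N_chain S hN (dil S.deg (N k ^ β₁) k) y
          (dil S.deg (N l ^ β₂) l) C htri
        have hbound : N (S.mul (S.inv (dil S.deg (N k ^ β₁) k)) y)
            ≤ C * (C * (r * N k ^ β₁ + r * N l ^ β₂) + r * N l ^ β₂) := by
          calc N (S.mul (S.inv (dil S.deg (N k ^ β₁) k)) y)
              ≤ C * (N (S.mul (S.inv (dil S.deg (N k ^ β₁) k)) (dil S.deg (N l ^ β₂) l))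
                  + N (S.mul (S.inv (dil S.deg (N l ^ β₂) l)) y)) := hchain
            _ ≤ C * (C * (r * N k ^ β₁ + r * N l ^ β₂) + r * N l ^ β₂) :=
                mul_le_mul_of_nonneg_left (add_le_add hD hy'.le) hCpos.le
        have hfinal : C * (C * (r * N k ^ β₁ + r * N l ^ β₂) + r * N l ^ β₂) < lam * s := by
          have ha' : r * N k ^ β₁ ≤ r * (s / cγ) := by
            rw [← hadef] at *
            exact mul_le_mul_of_nonneg_left haβ₁ hr.le
          have hb' : r * N l ^ β₂ ≤ r * (Λ * s) := by
            rw [← hbdef] at *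
            exact mul_le_mul_of_nonneg_left hble hr.le
          have t3 : C * (r * N k ^ β₁ + r * N l ^ β₂) + r * N l ^ β₂
              ≤ C * (r * (s / cγ) + r * (Λ * s)) + r * (Λ * s) :=
            add_le_add (mul_le_mul_of_nonneg_left (add_le_add ha' hb') hCpos.le) hb'
          have t4 : C * (C * (r * N k ^ β₁ + r * N l ^ β₂) + r * N l ^ β₂)
              ≤ C * (C * (r * (s / cγ) + r * (Λ * s)) + r * (Λ * s)) :=
            mul_le_mul_of_nonneg_left t3 hCpos.le
          have expand : C * (C * (r * (s / cγ) + r * (Λ * s)) + r * (Λ * s))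
              = (C * (C * r / cγ + C * r * Λ + r * Λ)) * s := by ring
          have hlt : (C * (C * r / cγ + C * r * Λ + r * Λ)) * s < lam * s := by
            apply mul_lt_mul_of_pos_right _ hspos
            rw [hlamdef]
            linarith
          linarith
        exact lt_of_le_of_lt hbound hfinal
      · -- volume lower bound
        rw [hB2, hvol β₂ l hl0]
        apply mul_le_mul_left
        apply ENNReal.ofReal_le_ofReal
        apply pow_le_pow_left₀ (mul_pos hr hspos).le
        rw [← hbdef]
        exact mul_le_mul_of_nonneg_left hsle hr.le
    -- now the counting argument
    have hcount := SGaux.finset_count volume F (fun l => alphaBall S N r α₂ l)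
      (fun l => by
        show MeasurableSet (alphaBall S N r α₂ l)
        rw [hB2 l]; exact (SGaux.isOpen_qBall S hN _ _).measurableSet)
      (qBall S N (dil S.deg (N k ^ β₁) k) (lam * s))
      ((SGaux.isOpen_qBall S hN _ _).measurableSet)
      (fun l hl => (hper l hl).1)
      (ENNReal.ofReal ((r * s) ^ S.Q) * v)
      (fun l hl => (hper l hl).2) M₂
      (fun x => by
        refine le_trans (Set.encard_mono ?_) (hmult x)
        rintro l ⟨h1, h2⟩
        exact ⟨(hF (Finset.mem_coe.mpr h1)).1, h2⟩)
    rw [SGaux.vol_qBall S hN _ hHaar _ (mul_pos hlampos hspos), ← hvdef] at hcount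
    -- cancel `v` and extract the real inequality
    have hcount2 : (F.card : ENNReal) * ENNReal.ofReal ((r * s) ^ S.Q)
        ≤ (M₂ : ENNReal) * ENNReal.ofReal ((lam * s) ^ S.Q) := by
      rw [← ENNReal.mul_le_mul_iff_left hv0 hvtop]
      calc (F.card : ENNReal) * ENNReal.ofReal ((r * s) ^ S.Q) * v
          = (F.card : ENNReal) * (ENNReal.ofReal ((r * s) ^ S.Q) * v) := by ring
        _ ≤ (M₂ : ENNReal) * (ENNReal.ofReal ((lam * s) ^ S.Q) * v) := hcount
        _ = (M₂ : ENNReal) * ENNReal.ofReal ((lam * s) ^ S.Q) * v := by ring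
    have hreal : (F.card : ℝ) * (r * s) ^ S.Q ≤ (M₂ : ℝ) * (lam * s) ^ S.Q := by
      have h1 : ENNReal.ofReal ((F.card : ℝ) * (r * s) ^ S.Q)
          ≤ ENNReal.ofReal ((M₂ : ℝ) * (lam * s) ^ S.Q) := by
        rw [ENNReal.ofReal_mul (Nat.cast_nonneg _), ENNReal.ofReal_mul (Nat.cast_nonneg _),
          ENNReal.ofReal_natCast, ENNReal.ofReal_natCast]
        exact hcount2
      rwa [ENNReal.ofReal_le_ofReal_iff
        (mul_nonneg (Nat.cast_nonneg _) (pow_nonneg (mul_pos hlampos hspos).le _))] at h1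
    have hcard : (F.card : ℝ) ≤ (M₂ : ℝ) * lam ^ S.Q / r ^ S.Q := by
      rw [mul_pow, mul_pow] at hreal
      have hsQ : (0:ℝ) < s ^ S.Q := pow_pos hspos _
      have hrQ : (0:ℝ) < r ^ S.Q := pow_pos hr _
      rw [le_div_iff₀ hrQ]
      refine le_of_mul_le_mul_right ?_ hsQ
      calc (F.card : ℝ) * r ^ S.Q * s ^ S.Q = (F.card : ℝ) * (r ^ S.Q * s ^ S.Q) := by ring
        _ ≤ (M₂ : ℝ) * (lam ^ S.Q * s ^ S.Q) := hreal
        _ = (M₂ : ℝ) * lam ^ S.Q * s ^ S.Q := by ring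
    have := le_trans hcard (Nat.le_ceil _)
    exact_mod_cast this
  · -- PART 2 : failure of the converse subordination
    rintro ⟨M₁, hM₁⟩
    set K₁ := max ((2 * C ^ 2 * r) ^ (1 + β₁)) (2 * C + 2 * C ^ 2 * r / ε) with hK₁def
    clear_value K₁
    have haux1 : (1 : ℝ) ≤ 2 * C + 2 * C ^ 2 * r / ε := by
      have : (0:ℝ) ≤ 2 * C ^ 2 * r / ε := by positivity
      linarith
    have hK₁1 : 1 ≤ K₁ := by rw [hK₁def]; exact le_trans haux1 (le_max_right _ _)
    have hK₁pos : 0 < K₁ := lt_of_lt_of_le one_pos hK₁1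
    -- the key volume estimate, valid for every lattice point
    have hkey : ∀ k ∈ L \ ({0} : Set (Fin n → ℝ)),
        (N k ^ β₂) ^ S.Q ≤ (M₁ : ℝ) * ((K₁ * (1 + N k ^ (1 + β₂))) ^ γ₁) ^ S.Q := by
      intro k hk
      obtain ⟨hk0, hkε, hkpos⟩ := hLprop k hk
      have hXpos : 0 < 1 + N k ^ (1 + β₂) := by
        have := Real.rpow_pos_of_pos hkpos (1 + β₂); linarith
      have hUpos : 0 < (K₁ * (1 + N k ^ (1 + β₂))) ^ γ₁ :=
        Real.rpow_pos_of_pos (mul_pos hK₁pos hXpos) _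
      -- the meeting set is finite with at most M₁ elements
      have henc := hM₁ k hk
      have hfin : {l | l ∈ L \ ({0} : Set (Fin n → ℝ)) ∧
          (alphaBall S N r α₁ l ∩ alphaBall S N r α₂ k).Nonempty}.Finite := by
        rw [← Set.encard_lt_top_iff]
        exact lt_of_le_of_lt henc (Ne.lt_top (by simp))
      have hFcard : hfin.toFinset.card ≤ M₁ := by
        have h2 : ((hfin.toFinset.card : ℕ) : ℕ∞) ≤ (M₁ : ℕ∞) := by
          rw [← Set.encard_coe_eq_coe_finsetCard, Set.Finite.coe_toFinset]
          exact henc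
        exact_mod_cast h2
      -- the ball B₂(k) is covered by the meeting α₁-balls
      have hcover : alphaBall S N r α₂ k ⊆ ⋃ l ∈ hfin.toFinset, alphaBall S N r α₁ l := by
        intro y hy
        have hyuniv : y ∈ ⋃ l ∈ L \ ({0} : Set (Fin n → ℝ)), alphaBall S N r α₁ l := by
          rw [hcov₁]; trivial
        simp only [Set.mem_iUnion] at hyuniv
        obtain ⟨l, hlmem, hyl⟩ := hyuniv
        have hlF : l ∈ hfin.toFinset :=
          hfin.mem_toFinset.mpr ⟨hlmem, ⟨y, hyl, hy⟩⟩
        exact Set.mem_biUnion hlF hyl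
      -- each meeting ball has controlled volume
      have hball : ∀ l ∈ hfin.toFinset, volume (alphaBall S N r α₁ l)
          ≤ ENNReal.ofReal ((r * (K₁ * (1 + N k ^ (1 + β₂))) ^ γ₁) ^ S.Q) * v := by
        intro l hl
        obtain ⟨hlmem, hmeet⟩ := hfin.mem_toFinset.mp hl
        obtain ⟨hl0, hlε, hlpos⟩ := hLprop l hlmem
        rw [hB1, hB2] at hmeet
        have hbound := SGaux.meet_bound S hN C hC1 htri ε hε r hr β₂ β₁ hβ₂0 hβ₁0
          hk0 hl0 hkε hmeet
        rw [← hK₁def] at hbound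
        rw [hB1 l, hvol β₁ l hl0]
        apply mul_le_mul_left
        apply ENNReal.ofReal_le_ofReal
        apply pow_le_pow_left₀ (mul_nonneg hr.le (Real.rpow_nonneg hlpos.le _))
        apply mul_le_mul_of_nonneg_left _ hr.le
        have e1 : N l ^ β₁ = (N l ^ (1 + β₁)) ^ γ₁ := by
          rw [hγ₁def, hcollapse _ β₁ hlpos h1β₁]
        rw [e1]
        exact Real.rpow_le_rpow (Real.rpow_nonneg hlpos.le _) hbound hγ₁0
      -- put the volume estimates together
      have hchain : ENNReal.ofReal ((r * N k ^ β₂) ^ S.Q) * v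
          ≤ (M₁ : ENNReal) *
            (ENNReal.ofReal ((r * (K₁ * (1 + N k ^ (1 + β₂))) ^ γ₁) ^ S.Q) * v) := by
        calc ENNReal.ofReal ((r * N k ^ β₂) ^ S.Q) * v
            = volume (alphaBall S N r α₂ k) := by rw [hB2, hvol β₂ k hk0]
          _ ≤ volume (⋃ l ∈ hfin.toFinset, alphaBall S N r α₁ l) := measure_mono hcover
          _ ≤ ∑ l ∈ hfin.toFinset, volume (alphaBall S N r α₁ l) :=
              measure_biUnion_finset_le _ _
          _ ≤ ∑ _l ∈ hfin.toFinset,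
              (ENNReal.ofReal ((r * (K₁ * (1 + N k ^ (1 + β₂))) ^ γ₁) ^ S.Q) * v) :=
              Finset.sum_le_sum hball
          _ = (hfin.toFinset.card : ENNReal) *
              (ENNReal.ofReal ((r * (K₁ * (1 + N k ^ (1 + β₂))) ^ γ₁) ^ S.Q) * v) := by
              rw [Finset.sum_const, nsmul_eq_mul]
          _ ≤ (M₁ : ENNReal) *
              (ENNReal.ofReal ((r * (K₁ * (1 + N k ^ (1 + β₂))) ^ γ₁) ^ S.Q) * v) :=
              mul_le_mul_left (Nat.cast_le.mpr hFcard) _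
      -- cancel `v` and `ofReal`
      have hrealk : (r * N k ^ β₂) ^ S.Q
          ≤ (M₁ : ℝ) * (r * (K₁ * (1 + N k ^ (1 + β₂))) ^ γ₁) ^ S.Q := by
        have h2 : ENNReal.ofReal ((r * N k ^ β₂) ^ S.Q)
            ≤ ENNReal.ofReal ((M₁ : ℝ) * (r * (K₁ * (1 + N k ^ (1 + β₂))) ^ γ₁) ^ S.Q) := by
          rw [ENNReal.ofReal_mul (Nat.cast_nonneg _), ENNReal.ofReal_natCast]
          rw [← ENNReal.mul_le_mul_iff_left hv0 hvtop]
          calc ENNReal.ofReal ((r * N k ^ β₂) ^ S.Q) * v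
              ≤ (M₁ : ENNReal) *
                (ENNReal.ofReal ((r * (K₁ * (1 + N k ^ (1 + β₂))) ^ γ₁) ^ S.Q) * v) := hchain
            _ = (M₁ : ENNReal) *
                ENNReal.ofReal ((r * (K₁ * (1 + N k ^ (1 + β₂))) ^ γ₁) ^ S.Q) * v := by ring
        rwa [ENNReal.ofReal_le_ofReal_iff
          (mul_nonneg (Nat.cast_nonneg _)
            (pow_nonneg (mul_nonneg hr.le hUpos.le) _))] at h2
      -- divide by r ^ Q
      rw [mul_pow, mul_pow] at hrealk
      have hrQ : (0:ℝ) < r ^ S.Q := pow_pos hr _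
      refine le_of_mul_le_mul_left ?_ hrQ
      calc r ^ S.Q * (N k ^ β₂) ^ S.Q
          ≤ (M₁ : ℝ) * (r ^ S.Q * ((K₁ * (1 + N k ^ (1 + β₂))) ^ γ₁) ^ S.Q) := hrealk
        _ = r ^ S.Q * ((M₁ : ℝ) * ((K₁ * (1 + N k ^ (1 + β₂))) ^ γ₁) ^ S.Q) := by ring
    -- norms of lattice points are unbounded
    have hunbdd : ∀ T : ℝ, ∃ k ∈ L \ ({0} : Set (Fin n → ℝ)), T < N k := by
      intro T
      by_contra hcon
      push_neg at hcon
      have hTb1 : (1:ℝ) ≤ max T 1 := le_max_right _ _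
      have hTbpos : (0:ℝ) < max T 1 := lt_of_lt_of_le one_pos hTb1
      have hR₀0 : (0:ℝ) ≤ C * ((max T 1) ^ (1 + β₁) + r * (max T 1) ^ β₁) := by
        have h1 : (0:ℝ) < (max T 1) ^ (1 + β₁) := Real.rpow_pos_of_pos hTbpos _
        have h2 : (0:ℝ) < (max T 1) ^ β₁ := Real.rpow_pos_of_pos hTbpos _
        have h3 : (0:ℝ) ≤ r * (max T 1) ^ β₁ := mul_nonneg hr.le h2.le
        exact mul_nonneg hCpos.le (by linarith)
      -- a point of large norm
      have hx₀ne : ((fun _ => 1 : Fin n → ℝ)) ≠ 0 := by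
        intro h
        have := congrFun h ⟨0, hn⟩
        norm_num at this
      have hNx₀ : 0 < N (fun _ => 1 : Fin n → ℝ) := SGaux.N_pos S hN hx₀ne
      set R₀ := C * ((max T 1) ^ (1 + β₁) + r * (max T 1) ^ β₁) with hR₀def
      clear_value R₀
      have hy : N (dil S.deg ((R₀ + 1) / N (fun _ => 1 : Fin n → ℝ))
          (fun _ => 1 : Fin n → ℝ)) = R₀ + 1 := by
        rw [hN.homogeneous _ (by positivity) _, div_mul_cancel₀]
        exact hNx₀.ne'
      have hyuniv : dil S.deg ((R₀ + 1) / N (fun _ => 1 : Fin n → ℝ))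
          (fun _ => 1 : Fin n → ℝ) ∈
          ⋃ l ∈ L \ ({0} : Set (Fin n → ℝ)), alphaBall S N r α₁ l := by
        rw [hcov₁]; trivial
      simp only [Set.mem_iUnion] at hyuniv
      obtain ⟨l, hlmem, hyl⟩ := hyuniv
      obtain ⟨hl0, hlε, hlpos⟩ := hLprop l hlmem
      have hNlT : N l ≤ max T 1 := le_trans (hcon l hlmem) (le_max_left _ _)
      rw [hB1] at hyl
      have hyl' : N (S.mul (S.inv (dil S.deg (N l ^ β₁) l))
          (dil S.deg ((R₀ + 1) / N (fun _ => 1 : Fin n → ℝ)) (fun _ => 1 : Fin n → ℝ)))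
          < r * N l ^ β₁ := hyl
      have hpt := SGaux.N_point S hN (dil S.deg (N l ^ β₁) l)
        (dil S.deg ((R₀ + 1) / N (fun _ => 1 : Fin n → ℝ)) (fun _ => 1 : Fin n → ℝ)) C htri
      rw [SGaux.N_dil_center S hN hl0 β₁, hy] at hpt
      have hb1 : N l ^ (1 + β₁) ≤ (max T 1) ^ (1 + β₁) :=
        Real.rpow_le_rpow hlpos.le hNlT (by linarith)
      have hb2 : N l ^ β₁ ≤ (max T 1) ^ β₁ :=
        Real.rpow_le_rpow hlpos.le hNlT hβ₁0
      have hfin2 : R₀ + 1 ≤ R₀ := by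
        calc R₀ + 1 ≤ C * (N l ^ (1 + β₁) + N (S.mul (S.inv (dil S.deg (N l ^ β₁) l))
              (dil S.deg ((R₀ + 1) / N (fun _ => 1 : Fin n → ℝ))
                (fun _ => 1 : Fin n → ℝ)))) := hpt
          _ ≤ C * ((max T 1) ^ (1 + β₁) + r * (max T 1) ^ β₁) := by
              have h5 : r * N l ^ β₁ ≤ r * (max T 1) ^ β₁ :=
                mul_le_mul_of_nonneg_left hb2 hr.le
              exact mul_le_mul_of_nonneg_left (by linarith [hyl', hb1]) hCpos.le
          _ = R₀ := hR₀def.symm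
      linarith
    -- choose a very large lattice point and derive the contradiction
    have hQR : (0:ℝ) < (S.Q : ℝ) := by exact_mod_cast lt_of_lt_of_le one_pos hQ1
    have hexp : 0 < β₂ - (1 + β₂) * γ₁ := by
      rw [hγ₁def]
      rw [sub_pos, ← mul_div_assoc, div_lt_iff₀ h1β₁]
      nlinarith
    have hη : 0 < (β₂ - (1 + β₂) * γ₁) * (S.Q : ℝ) := mul_pos hexp hQR
    set η := (β₂ - (1 + β₂) * γ₁) * (S.Q : ℝ) with hηdef
    clear_value η
    set Cst := (M₁ : ℝ) * ((2 * K₁) ^ (γ₁ * (S.Q : ℝ))) with hCstdef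
    clear_value Cst
    have hCst0 : 0 ≤ Cst := by
      rw [hCstdef]
      exact mul_nonneg (Nat.cast_nonneg _) (Real.rpow_pos_of_pos (by linarith) _).le
    obtain ⟨k, hk, hbig⟩ := hunbdd (max 1 ((Cst + 1) ^ (1 / η)))
    obtain ⟨hk0, hkε, hkpos⟩ := hLprop k hk
    have ha1 : (1:ℝ) < N k := lt_of_le_of_lt (le_max_left _ _) hbig
    have haQ : N k ^ η ≤ Cst := by
      have h1 := hkey k hk
      -- convert to rpow form
      have e1 : (N k ^ β₂) ^ S.Q = N k ^ (β₂ * (S.Q : ℝ)) := by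
        rw [Real.rpow_mul hkpos.le, Real.rpow_natCast]
      have hXpos : 0 < 1 + N k ^ (1 + β₂) := by
        have := Real.rpow_pos_of_pos hkpos (1 + β₂); linarith
      have e2 : ((K₁ * (1 + N k ^ (1 + β₂))) ^ γ₁) ^ S.Q
          = (K₁ * (1 + N k ^ (1 + β₂))) ^ (γ₁ * (S.Q : ℝ)) := by
        rw [Real.rpow_mul (mul_pos hK₁pos hXpos).le, Real.rpow_natCast]
      rw [e1, e2] at h1
      -- bound 1 + a^{1+β₂} ≤ 2 a^{1+β₂}
      have haX : 1 + N k ^ (1 + β₂) ≤ 2 * N k ^ (1 + β₂) := by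
        have : (1:ℝ) ≤ N k ^ (1 + β₂) := Real.one_le_rpow ha1.le (by linarith)
        linarith
      have e3 : (K₁ * (1 + N k ^ (1 + β₂))) ^ (γ₁ * (S.Q : ℝ))
          ≤ (2 * K₁ * N k ^ (1 + β₂)) ^ (γ₁ * (S.Q : ℝ)) := by
        apply Real.rpow_le_rpow (mul_pos hK₁pos hXpos).le _
          (mul_nonneg hγ₁0 hQR.le)
        nlinarith [haX, hK₁pos, Real.rpow_pos_of_pos hkpos (1 + β₂)]
      have e4 : (2 * K₁ * N k ^ (1 + β₂)) ^ (γ₁ * (S.Q : ℝ))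
          = (2 * K₁) ^ (γ₁ * (S.Q : ℝ)) * N k ^ ((1 + β₂) * (γ₁ * (S.Q : ℝ))) := by
        rw [Real.mul_rpow (by linarith) (Real.rpow_pos_of_pos hkpos _).le,
          ← Real.rpow_mul hkpos.le]
      have h2 : N k ^ (β₂ * (S.Q : ℝ))
          ≤ Cst * N k ^ ((1 + β₂) * (γ₁ * (S.Q : ℝ))) := by
        rw [hCstdef, mul_assoc]
        calc N k ^ (β₂ * (S.Q : ℝ))
            ≤ (M₁ : ℝ) * (K₁ * (1 + N k ^ (1 + β₂))) ^ (γ₁ * (S.Q : ℝ)) := h1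
          _ ≤ (M₁ : ℝ) * ((2 * K₁) ^ (γ₁ * (S.Q : ℝ))
              * N k ^ ((1 + β₂) * (γ₁ * (S.Q : ℝ)))) := by
              apply mul_le_mul_of_nonneg_left _ (Nat.cast_nonneg _)
              rw [← e4]
              exact e3
      have e5 : N k ^ (β₂ * (S.Q : ℝ))
          = N k ^ η * N k ^ ((1 + β₂) * (γ₁ * (S.Q : ℝ))) := by
        rw [← Real.rpow_add hkpos, hηdef]
        congr 1
        ring
      rw [e5] at h2
      exact le_of_mul_le_mul_right
        (by calc N k ^ η * N k ^ ((1 + β₂) * (γ₁ * (S.Q : ℝ)))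
              ≤ Cst * N k ^ ((1 + β₂) * (γ₁ * (S.Q : ℝ))) := h2) 
        (Real.rpow_pos_of_pos hkpos _)
    have hcontra : Cst + 1 ≤ N k ^ η := by
      have h1 : (Cst + 1) ^ (1 / η) < N k :=
        lt_of_le_of_lt (le_max_right _ _) hbig
      have h2 : ((Cst + 1) ^ (1 / η)) ^ η ≤ N k ^ η :=
        Real.rpow_le_rpow (Real.rpow_nonneg (by linarith) _) h1.le hη.le
      rwa [← Real.rpow_mul (by linarith : (0:ℝ) ≤ Cst + 1), one_div,
        inv_mul_cancel₀ hη.ne', Real.rpow_one] at h2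
    linarith
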